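/- Let U ≥ 1 be a number of event types, let t : Fin N → ℝ be a strictly increasing sequence of event times with associated marks u : Fin N → Fin U. Suppose (Assumption 1) for every mark v there exists B_v > 0 such that a past event j contributes to the excitation sum at a later event i only if t_i − t_j ≤ B_{u_j}; and (Assumption 2) for every mark v there is a constant C_v ∈ ℕ such that every half-open real interval of length max_w B_w contains at most C_v events of mark v. Then there exists Q ∈ ℕ (one may take Q = Σ_{v=1}^U C_v) such that for every index i, every contributing index j (that is, every j < i with t_i − t_j ≤ B_{u_j}) satisfies i − j ≤ Q; in particular, the set of contributing past events at any event i has cardinality at most Q and is contained among the last Q events preceding i. -/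

import Mathlib

open Finset

/-- **Theorem 1 (cut-off theorem).** Given strictly increasing event times `t` with marks `u`,
if (Assumption 1) a past event `j` contributes to the excitation sum at a later event `i`
only when `t i - t j ≤ B (u j)` for mark-specific bounds `B v > 0`, and (Assumption 2)
every half-open interval of length `max_w B w` contains at most `C v` events of mark `v`,
then there exists `Q ∈ ℕ` (one may take `Q = ∑ v, C v`) such that every contributing index
`j` at any event `i` satisfies `i - j ≤ Q`; in particular the set of contributing past
events at `i` has cardinality at most `Q`. -/
theorem cutoff_last_Q_events
    (U N : ℕ) (hU : 1 ≤ U)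
    (t : Fin N → ℝ) (ht : StrictMono t)
    (u : Fin N → Fin U)
    (B : Fin U → ℝ) (hB : ∀ v, 0 < B v)
    (maxB : ℝ)
    (hmaxB : maxB = Finset.univ.sup' ⟨⟨0, hU⟩, Finset.mem_univ _⟩ B)
    (C : Fin U → ℕ)
    (hC : ∀ (v : Fin U) (a : ℝ),
      (Finset.univ.filter
        (fun j : Fin N => u j = v ∧ t j ∈ Set.Ico a (a + maxB))).card ≤ C v) :
    ∃ Q : ℕ, Q = ∑ v : Fin U, C v ∧
      (∀ i j : Fin N, j < i → t i - t j ≤ B (u j) → (i : ℕ) - (j : ℕ) ≤ Q) ∧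
      (∀ i : Fin N,
        (Finset.univ.filter (fun j : Fin N => j < i ∧ t i - t j ≤ B (u j))).card ≤ Q) := by
  set Q := ∑ v : Fin U, C v with hQ
  have hpart1 : ∀ i j : Fin N, j < i → t i - t j ≤ B (u j) → (i : ℕ) - (j : ℕ) ≤ Q := by
    intro i j hji hcontrib
    have hkey : ∀ k ∈ Finset.Ico j i, t k ∈ Set.Ico (t j) (t j + maxB) := by
      intro k hk
      rw [Finset.mem_Ico] at hk
      have h1 : t k < t i := ht hk.2
      have h2 : B (u j) ≤ maxB := by
        rw [hmaxB]; exact Finset.le_sup' B (Finset.mem_univ _)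
      exact ⟨ht.monotone hk.1, by linarith⟩
    have hcard : (Finset.Ico j i).card = (i : ℕ) - (j : ℕ) := by
      simp [Fin.card_Ico]
    rw [← hcard]
    rw [Finset.card_eq_sum_card_fiberwise (f := u) (t := Finset.univ)
      (fun x _ => Finset.mem_univ _)]
    apply Finset.sum_le_sum
    intro v _
    calc ((Finset.Ico j i).filter (fun k => u k = v)).card
        ≤ (Finset.univ.filter
            (fun k : Fin N => u k = v ∧ t k ∈ Set.Ico (t j) (t j + maxB))).card := by
          apply Finset.card_le_card
          intro k hk
          rw [Finset.mem_filter] at hk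
          rw [Finset.mem_filter]
          exact ⟨Finset.mem_univ _, hk.2, hkey k hk.1⟩
      _ ≤ C v := hC v (t j)
  refine ⟨Q, rfl, hpart1, ?_⟩
  intro i
  have hmap : (Finset.univ.filter (fun j : Fin N => j < i ∧ t i - t j ≤ B (u j))).card
      ≤ (Finset.Ico ((i : ℕ) - Q) (i : ℕ)).card := by
    refine Finset.card_le_card_of_injOn (fun j => (j : ℕ)) ?_ ?_
    · intro j hj
      rw [Finset.mem_coe, Finset.mem_filter] at hj
      obtain ⟨_, hji, hcontrib⟩ := hj
      simp only [Finset.mem_coe, Finset.mem_Ico]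
      have h1 := hpart1 i j hji hcontrib
      have h2 : (j : ℕ) < (i : ℕ) := hji
      omega
    · intro a _ b _ hab
      exact Fin.val_injective hab
  calc _ ≤ (Finset.Ico ((i : ℕ) - Q) (i : ℕ)).card := hmap
    _ ≤ Q := by rw [Nat.card_Ico]; omega
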